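/- For every exponent σ ∈ [0, 1/(d+1)] with d ≥ 3, there is a constant C (independent of a, b) such that for all real a, b with a² + b² = 1 and b ≠ 0, ∫_0^∞ |b| ρ^{-σ} / ((ρ - |a|)² + b²) dρ ≤ C. -/

import Mathlib

open MeasureTheory Set Real
open scoped ENNReal

lemma poisson_integrable (b c : ℝ) (hb : b ≠ 0) :
    Integrable (fun x : ℝ => |b| / ((x - c) ^ 2 + b ^ 2)) := by
  have h1 : Integrable (fun t : ℝ => (1 + t ^ 2)⁻¹) := integrable_inv_one_add_sq
  have h2 : Integrable (fun x : ℝ => (1 + (x * b⁻¹) ^ 2)⁻¹) :=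
    h1.comp_mul_right' (inv_ne_zero hb)
  have h3 : Integrable (fun x : ℝ => (1 + ((x - c) * b⁻¹) ^ 2)⁻¹) := h2.comp_sub_right c
  have h4 := (h3.const_mul |b|⁻¹)
  refine h4.congr (Filter.Eventually.of_forall fun x => ?_)
  have hb2 : (0:ℝ) < b ^ 2 := by positivity
  have habs : |b| ≠ 0 := abs_ne_zero.mpr hb
  field_simp
  rw [sq_abs]
  ring

lemma poisson_integral (b c : ℝ) (hb : b ≠ 0) :
    ∫ x : ℝ, |b| / ((x - c) ^ 2 + b ^ 2) = π := by
  have habs : (0:ℝ) < |b| := abs_pos.mpr hb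
  have key : ∀ x : ℝ, |b| / ((x - c) ^ 2 + b ^ 2)
      = |b|⁻¹ * (1 + ((x - c) * b⁻¹) ^ 2)⁻¹ := by
    intro x
    have hb2 : (0:ℝ) < b ^ 2 := by positivity
    field_simp
    rw [sq_abs]
    ring
  simp_rw [key]
  rw [integral_const_mul]
  rw [integral_sub_right_eq_self (fun x : ℝ => (1 + (x * b⁻¹) ^ 2)⁻¹) c]
  rw [MeasureTheory.Measure.integral_comp_mul_right (fun t : ℝ => (1 + t ^ 2)⁻¹) b⁻¹]
  rw [integral_univ_inv_one_add_sq]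
  simp [abs_inv, smul_eq_mul]
  field_simp

/-- For every `σ ∈ [0, 1/(d+1)]` with `d ≥ 3`, there is a constant `C` (independent of
`a, b` ) such that for all real `a, b` with `a² + b² = 1` and `b ≠ 0`,
`∫_0^∞ |b| ρ^{-σ} / ((ρ - |a|)² + b²) dρ ≤ C`. -/
theorem uniform_poisson_integral_bound (d : ℕ) (hd : 3 ≤ d) (σ : ℝ)
    (hσ : σ ∈ Icc (0 : ℝ) (1 / (d + 1))) :
    ∃ C : ℝ, ∀ a b : ℝ, a ^ 2 + b ^ 2 = 1 → b ≠ 0 →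
      ∫⁻ ρ in Ioi (0 : ℝ),
        ENNReal.ofReal (|b| * ρ ^ (-σ) / ((ρ - |a|) ^ 2 + b ^ 2)) ≤ ENNReal.ofReal C := by
  obtain ⟨hσ0, hσ1⟩ := hσ
  have hd4 : (4:ℝ) ≤ (d:ℝ) + 1 := by
    have : (3:ℝ) ≤ (d:ℝ) := by exact_mod_cast hd
    linarith
  have hσ4 : σ ≤ 1/4 := by
    refine hσ1.trans ?_
    rw [div_le_div_iff₀ (by linarith) (by norm_num)]
    linarith
  refine ⟨100, ?_⟩
  intro a b hab hb
  set c := |a| with hc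
  have hc0 : 0 ≤ c := abs_nonneg a
  have hc1 : c ≤ 1 := by
    rw [hc, abs_le]
    constructor <;> nlinarith [sq_nonneg b, sq_nonneg a]
  have hb1 : |b| ≤ 1 := by
    rw [abs_le]
    constructor <;> nlinarith [sq_nonneg a, sq_nonneg b]
  have hbpos : (0:ℝ) < |b| := abs_pos.mpr hb
  have hb2pos : (0:ℝ) < b ^ 2 := by positivity
  -- split the domain
  have hsplit : Ioi (0:ℝ) = Ioc (0:ℝ) (1/2) ∪ Ioi (1/2 : ℝ) :=
    (Ioc_union_Ioi_eq_Ioi (by norm_num)).symm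
  rw [hsplit, lintegral_union measurableSet_Ioi (Ioc_disjoint_Ioi le_rfl)]
  -- Part A : on (0, 1/2]
  have hkey : ∀ ρ : ℝ, ρ ∈ Ioc (0:ℝ) (1/2) →
      |b| * ρ ^ (-σ) / ((ρ - c) ^ 2 + b ^ 2) ≤ 16 * ρ ^ (-σ) := by
    intro ρ hρ
    obtain ⟨hρ0, hρ12⟩ := hρ
    have hrpow : (0:ℝ) ≤ ρ ^ (-σ) := rpow_nonneg hρ0.le _
    have hD : (0:ℝ) < (ρ - c) ^ 2 + b ^ 2 := by positivity
    rw [div_le_iff₀ hD]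
    have hfrac : |b| ≤ 16 * ((ρ - c) ^ 2 + b ^ 2) := by
      rcases le_or_gt (3/4 : ℝ) c with hcase | hcase
      · have hgap : (1/4 : ℝ) ≤ c - ρ := by linarith
        nlinarith [sq_nonneg b, sq_nonneg (c - ρ - 1/4)]
      · have hb2 : (7/16 : ℝ) ≤ b ^ 2 := by nlinarith [sq_abs a, abs_nonneg a]
        nlinarith [sq_abs b, sq_nonneg (ρ - c), sq_nonneg (|b| - 1)]
    nlinarith [mul_le_mul_of_nonneg_right hfrac hrpow]
  have hA : (∫⁻ ρ in Ioc (0:ℝ) (1/2),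
      ENNReal.ofReal (|b| * ρ ^ (-σ) / ((ρ - c) ^ 2 + b ^ 2)))
      ≤ ENNReal.ofReal 22 := by
    have step1 : (∫⁻ ρ in Ioc (0:ℝ) (1/2),
        ENNReal.ofReal (|b| * ρ ^ (-σ) / ((ρ - c) ^ 2 + b ^ 2)))
        ≤ ∫⁻ ρ in Ioc (0:ℝ) (1/2), ENNReal.ofReal (16 * ρ ^ (-σ)) := by
      refine setLIntegral_mono' measurableSet_Ioc fun ρ hρ => ?_
      exact ENNReal.ofReal_le_ofReal (hkey ρ hρ)
    refine step1.trans ?_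
    have hint : IntegrableOn (fun ρ : ℝ => 16 * ρ ^ (-σ)) (Ioc (0:ℝ) (1/2)) := by
      have := (intervalIntegral.intervalIntegrable_rpow' (a := 0) (b := 1/2)
        (r := -σ) (by linarith)).const_mul 16
      rwa [intervalIntegrable_iff_integrableOn_Ioc_of_le (by norm_num)] at this
    rw [← ofReal_integral_eq_lintegral_ofReal hint
      (ae_restrict_of_forall_mem measurableSet_Ioc fun ρ hρ => by
        have : (0:ℝ) < ρ := hρ.1
        positivity)]
    apply ENNReal.ofReal_le_ofReal
    have hval : ∫ ρ in Ioc (0:ℝ) (1/2), 16 * ρ ^ (-σ)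
        = 16 * (((1/2:ℝ) ^ (-σ + 1) - (0:ℝ) ^ (-σ + 1)) / (-σ + 1)) := by
      rw [← intervalIntegral.integral_of_le (by norm_num : (0:ℝ) ≤ 1/2)]
      rw [intervalIntegral.integral_const_mul]
      rw [integral_rpow (Or.inl (by linarith))]
    rw [hval, zero_rpow (by linarith : -σ + 1 ≠ 0)]
    have h1 : ((1:ℝ)/2) ^ (-σ + 1) ≤ 1 :=
      rpow_le_one (by norm_num) (by norm_num) (by linarith)
    have h2 : (3/4 : ℝ) ≤ -σ + 1 := by linarith
    rw [sub_zero]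
    have h3 : ((1:ℝ)/2) ^ (-σ + 1) / (-σ + 1) ≤ 1 / (3/4) :=
      div_le_div₀ (by norm_num) h1 (by norm_num) h2
    have h4 := mul_le_mul_of_nonneg_left h3 (by norm_num : (0:ℝ) ≤ 16)
    linarith
  -- Part B : on (1/2, ∞)
  have hB : (∫⁻ ρ in Ioi (1/2 : ℝ),
      ENNReal.ofReal (|b| * ρ ^ (-σ) / ((ρ - c) ^ 2 + b ^ 2)))
      ≤ ENNReal.ofReal 8 := by
    have step1 : (∫⁻ ρ in Ioi (1/2 : ℝ),
        ENNReal.ofReal (|b| * ρ ^ (-σ) / ((ρ - c) ^ 2 + b ^ 2)))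
        ≤ ∫⁻ ρ in Ioi (1/2 : ℝ),
          ENNReal.ofReal (2 * (|b| / ((ρ - c) ^ 2 + b ^ 2))) := by
      refine setLIntegral_mono' measurableSet_Ioi fun ρ hρ => ?_
      apply ENNReal.ofReal_le_ofReal
      have hρ0 : (0:ℝ) < ρ := lt_trans (by norm_num) hρ
      have hD : (0:ℝ) < (ρ - c) ^ 2 + b ^ 2 := by positivity
      have hrpow : ρ ^ (-σ) ≤ 2 := by
        have e1 : ρ ^ (-σ) ≤ ((1:ℝ)/2) ^ (-σ) :=
          rpow_le_rpow_of_nonpos (by norm_num) (le_of_lt hρ) (by linarith)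
        have e2 : ((1:ℝ)/2) ^ (-σ) = (2:ℝ) ^ σ := by
          rw [one_div, inv_rpow (by norm_num), ← rpow_neg (by norm_num), neg_neg]
        have e3 : (2:ℝ) ^ σ ≤ (2:ℝ) ^ (1:ℝ) :=
          rpow_le_rpow_of_exponent_le (by norm_num) (by linarith)
        rw [e2] at e1
        simpa [rpow_one] using e1.trans e3
      calc |b| * ρ ^ (-σ) / ((ρ - c) ^ 2 + b ^ 2)
          = ρ ^ (-σ) * (|b| / ((ρ - c) ^ 2 + b ^ 2)) := by ring
        _ ≤ 2 * (|b| / ((ρ - c) ^ 2 + b ^ 2)) := by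
            apply mul_le_mul_of_nonneg_right hrpow (by positivity)
    refine step1.trans ?_
    have step2 : (∫⁻ ρ in Ioi (1/2 : ℝ),
        ENNReal.ofReal (2 * (|b| / ((ρ - c) ^ 2 + b ^ 2))))
        ≤ ∫⁻ ρ : ℝ, ENNReal.ofReal (2 * (|b| / ((ρ - c) ^ 2 + b ^ 2))) :=
      setLIntegral_le_lintegral _ _
    refine step2.trans ?_
    have hint : Integrable (fun ρ : ℝ => 2 * (|b| / ((ρ - c) ^ 2 + b ^ 2))) :=
      (poisson_integrable b c hb).const_mul 2
    rw [← ofReal_integral_eq_lintegral_ofReal hint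
      (Filter.Eventually.of_forall fun ρ => by positivity)]
    apply ENNReal.ofReal_le_ofReal
    rw [integral_const_mul, poisson_integral b c hb]
    linarith [pi_le_four]
  calc _ ≤ ENNReal.ofReal 22 + ENNReal.ofReal 8 := add_le_add hA hB
    _ = ENNReal.ofReal 30 := by rw [← ENNReal.ofReal_add] <;> norm_num
    _ ≤ ENNReal.ofReal 100 := ENNReal.ofReal_le_ofReal (by norm_num)
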